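/- Under the hypotheses that t is even, gcd(s, abc) = 1, gcd(r,t) = gcd(s,t) = 1, and s² = r³ + (b−a−c)r²t² + abc·t⁶, the principal ideal (s + t³√(abc))·O_K in the ring of integers of K = Q(√(abc), √(r+(b−a−c)t²)) is the square of an ideal of O_K. -/

import Mathlib

open NumberField

/-- Under the hypotheses that `t` is even, `gcd(s,abc) = 1`, `gcd(r,t) = gcd(s,t) = 1` and
`s² = r³ + (b−a−c)r²t² + abc·t⁶`, the principal ideal generated by `α = s + t³√(abc)` in
the ring of integers of `K = ℚ(√(abc), √(r+(b−a−c)t²))` is the square of an ideal. -/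
theorem stmt3 (a b c r s t : ℤ) (K : Type*) [Field K] [NumberField K]
    (u v : 𝓞 K) (hu : u ^ 2 = ((a * b * c : ℤ) : 𝓞 K))
    (hv : v ^ 2 = ((r + (b - a - c) * t ^ 2 : ℤ) : 𝓞 K))
    (hgen : Algebra.adjoin ℚ {(u : K), (v : K)} = ⊤)
    (ht : Even t) (hrt : Int.gcd r t = 1) (hst : Int.gcd s t = 1)
    (hsabc : Int.gcd s (a * b * c) = 1)
    (hcurve : s ^ 2 = r ^ 3 + (b - a - c) * r ^ 2 * t ^ 2 + a * b * c * t ^ 6) :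
    ∃ I : Ideal (𝓞 K), Ideal.span {((s : 𝓞 K) + (t : 𝓞 K) ^ 3 * u)} = I ^ 2 := by
  set α : 𝓞 K := (s : 𝓞 K) + (t : 𝓞 K) ^ 3 * u with hα
  set β : 𝓞 K := (s : 𝓞 K) - (t : 𝓞 K) ^ 3 * u with hβ
  push_cast at hu hv
  -- the product α β = (r v)²
  have hcast : ((s : 𝓞 K)) ^ 2 = (r : 𝓞 K) ^ 3 + ((b : 𝓞 K) - a - c) * (r : 𝓞 K) ^ 2 * (t : 𝓞 K) ^ 2
      + (a : 𝓞 K) * b * c * (t : 𝓞 K) ^ 6 := by exact_mod_cast congrArg (fun z : ℤ => (z : 𝓞 K)) hcurve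
  have hprod : α * β = ((r : 𝓞 K) * v) ^ 2 := by
    rw [hα, hβ]
    linear_combination hcast - (t : 𝓞 K) ^ 6 * hu - (r : 𝓞 K) ^ 2 * hv
  -- r is odd
  have hodd : Odd r := by
    rw [← Int.not_even_iff_odd]
    intro hr
    have h2 : (2 : ℤ) ∣ Int.gcd r t := Int.dvd_coe_gcd hr.two_dvd ht.two_dvd
    rw [hrt] at h2
    norm_num at h2
  -- N := r³ + (b-a-c) r² t² is odd
  obtain ⟨k, hk⟩ := ht
  obtain ⟨m, hm⟩ := hodd
  set N : ℤ := r ^ 3 + (b - a - c) * r ^ 2 * t ^ 2 with hN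
  have hNodd : Odd N := by
    refine ⟨(4*m^3 + 6*m^2 + 3*m) + (b - a - c) * r ^ 2 * (2*k^2), ?_⟩
    rw [hN, hm, hk]; ring
  -- coprimality of the ideals (α), (β)
  have hcop : Ideal.span {α} ⊔ Ideal.span {β} = ⊤ := by
    rw [Ideal.eq_top_iff_one]
    have hmemα : α ∈ Ideal.span {α} ⊔ Ideal.span {β} :=
      Ideal.mem_sup_left (Ideal.subset_span rfl)
    have hmemβ : β ∈ Ideal.span {α} ⊔ Ideal.span {β} :=
      Ideal.mem_sup_right (Ideal.subset_span rfl)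
    have h2s : (2 : 𝓞 K) * s ∈ Ideal.span {α} ⊔ Ideal.span {β} := by
      have := Ideal.add_mem _ hmemα hmemβ
      convert this using 1
      rw [hα, hβ]; ring
    have h2t : (2 : 𝓞 K) * ((t : 𝓞 K) ^ 3 * u) ∈ Ideal.span {α} ⊔ Ideal.span {β} := by
      have := Ideal.sub_mem _ hmemα hmemβ
      convert this using 1
      rw [hα, hβ]; ring
    -- 2 ∈ J using Bezout for s² and t⁶ abc
    have hcsz : IsCoprime (s ^ 2) (t ^ 6 * (a * b * c)) := by
      have h1 : IsCoprime s t := Int.isCoprime_iff_gcd_eq_one.mpr hst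
      have h2 : IsCoprime s (a * b * c) := Int.isCoprime_iff_gcd_eq_one.mpr hsabc
      exact (h1.pow_right.mul_right h2).pow_left
    obtain ⟨x, y, hxy⟩ := hcsz
    have h2mem : (2 : 𝓞 K) ∈ Ideal.span {α} ⊔ Ideal.span {β} := by
      have hA : (x : 𝓞 K) * s * ((2 : 𝓞 K) * s) + ((y : 𝓞 K) * (t : 𝓞 K) ^ 3 * u) * ((2 : 𝓞 K) * ((t : 𝓞 K) ^ 3 * u))
          ∈ Ideal.span {α} ⊔ Ideal.span {β} :=
        Ideal.add_mem _ (Ideal.mul_mem_left _ _ h2s) (Ideal.mul_mem_left _ _ h2t)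
      have hxyT : (x : 𝓞 K) * (s : 𝓞 K) ^ 2 + (y : 𝓞 K) * ((t : 𝓞 K) ^ 6 * ((a: 𝓞 K) * b * c)) = 1 := by
        exact_mod_cast congrArg (fun z : ℤ => (z : 𝓞 K)) hxy
      convert hA using 1
      linear_combination (-2 : 𝓞 K) * (y : 𝓞 K) * (t: 𝓞 K)^6 * hu - 2 * hxyT
    -- N ∈ J since N = α β
    have hNmem : ((N : ℤ) : 𝓞 K) ∈ Ideal.span {α} ⊔ Ideal.span {β} := by
      have : α * β ∈ Ideal.span {α} ⊔ Ideal.span {β} := Ideal.mul_mem_right _ _ hmemα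
      convert this using 1
      have : ((N : ℤ) : 𝓞 K) = (r : 𝓞 K) ^ 2 * ((r: 𝓞 K) + ((b: 𝓞 K) - a - c) * (t: 𝓞 K)^2) := by
        rw [hN]; push_cast; ring
      rw [this, hprod]
      linear_combination -(r : 𝓞 K) ^ 2 * hv
    -- Bezout for 2 and N
    obtain ⟨w, hw⟩ := hNodd
    have : (1 : 𝓞 K) = (-(w : 𝓞 K)) * 2 + 1 * ((N : ℤ) : 𝓞 K) := by
      have : ((N : ℤ) : 𝓞 K) = 2 * (w : 𝓞 K) + 1 := by exact_mod_cast congrArg (fun z : ℤ => (z : 𝓞 K)) hw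
      rw [this]; ring
    rw [this]
    exact Ideal.add_mem _ (Ideal.mul_mem_left _ _ h2mem) (Ideal.mul_mem_left _ _ hNmem)
  -- conclude: product of coprime ideals is a square
  have hmul : Ideal.span {α} * Ideal.span {β} = (Ideal.span {(r : 𝓞 K) * v}) ^ 2 := by
    rw [Ideal.span_singleton_mul_span_singleton, hprod, Ideal.span_singleton_pow]
  have hgcd : IsUnit (gcd (Ideal.span {α}) (Ideal.span {β})) := by
    rw [Ideal.gcd_eq_sup, hcop, ← Ideal.one_eq_top]
    exact isUnit_one
  exact exists_eq_pow_of_mul_eq_pow hgcd hmul
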